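/- For all m ≥ 1, n ≥ 2 and 0 ≤ k ≤ n-1, the m-th order Eulerian numbers satisfy the recurrence T^(m)_{n,k} = (k+1)·T^(m)_{n-1,k} + (mn - k - m + 1)·T^(m)_{n-1,k-1}. -/

import Mathlib

/-- Number of descents of a list: positions `j` with `a_j > a_{j+1}`. -/
def descents (l : List ℕ) : ℕ :=
  ((List.range (l.length - 1)).filter (fun i => l.getD (i + 1) 0 < l.getD i 0)).length

/-- An `m`-Stirling permutation condition: whenever `u < v < w` and `a_u = a_w`,
then `a_v ≤ a_u`. -/
def IsStirlingPerm (l : List ℕ) : Prop :=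
  ∀ u v w : ℕ, u < v → v < w → w < l.length →
    l.getD u 0 = l.getD w 0 → l.getD v 0 ≤ l.getD u 0

/-- The multiset `{1^m, 2^m, …, n^m}` as a list. -/
def baseList (m n : ℕ) : List ℕ :=
  (List.range n).flatMap fun i => List.replicate m (i + 1)

/-- `T^(m)_{n,k}`: the number of `m`-Stirling permutations of `{1^m, …, n^m}`
with exactly `k` descents (an integer index `k`, so it vanishes for `k < 0`). -/
noncomputable def eulerianT (m n : ℕ) (k : ℤ) : ℕ :=
  Nat.card {l : List ℕ // l.Perm (baseList m n) ∧ IsStirlingPerm l ∧ (descents l : ℤ) = k}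


/-! ### Auxiliary machinery -/

section EulerianAux

/-- Inductive computation of descents. -/
private def Daux : List ℕ → ℕ
  | [] => 0
  | a :: l => (match l.head? with | some b => if b < a then 1 else 0 | none => 0) + Daux l

private lemma descents_cons_aux (a : ℕ) (l : List ℕ) :
    descents (a :: l) = (match l.head? with | some b => if b < a then 1 else 0 | none => 0)
      + descents l := by
  cases l with
  | nil => rfl
  | cons b l' =>
    show descents (a :: b :: l') = (if b < a then 1 else 0) + descents (b :: l')
    have h1 : descents (a :: b :: l')
        = ((List.range (l'.length + 1)).filter
            (fun i => decide ((a::b::l').getD (i + 1) 0 < (a::b::l').getD i 0))).length := rfl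
    have h2 : ((fun i => decide ((a::b::l').getD (i + 1) 0 < (a::b::l').getD i 0)) ∘ Nat.succ)
        = fun i => decide ((b::l').getD (i + 1) 0 < (b::l').getD i 0) := by
      funext i
      show decide ((a::b::l').getD (i+1+1) 0 < (a::b::l').getD (i+1) 0) = _
      simp only [List.getD_cons_succ]
    have h3 : ((List.range l'.length).filter
        (fun i => decide ((b::l').getD (i + 1) 0 < (b::l').getD i 0))).length
        = descents (b :: l') := rfl
    have e1 : ((List.map Nat.succ (List.range l'.length)).filter
        (fun i => decide ((a::b::l').getD (i + 1) 0 < (a::b::l').getD i 0))).length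
        = descents (b :: l') := by
      rw [List.filter_map, List.length_map, h2, h3]
    rw [h1, List.range_succ_eq_map, List.filter_cons]
    by_cases hb : b < a
    · rw [if_pos (by simpa using hb), List.length_cons, e1, if_pos hb]; omega
    · rw [if_neg (by simpa using hb), e1, if_neg hb]; omega

private lemma descents_eq_D (l : List ℕ) : descents l = Daux l := by
  induction l with
  | nil => rfl
  | cons a l ih => rw [descents_cons_aux, ih]; rfl

private lemma D_append (t d : List ℕ) :
    Daux (t ++ d) = Daux t + Daux d + (match t.getLast?, d.head? with
      | some a, some b => if b < a then 1 else 0 | _, _ => 0) := by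
  induction t with
  | nil => simp [Daux]
  | cons a t ih =>
    cases t with
    | nil =>
      cases d with
      | nil => simp [Daux]
      | cons b d' => simp [Daux]; omega
    | cons c t' =>
      have h : ((a :: c :: t') ++ d) = a :: ((c :: t') ++ d) := rfl
      rw [h, show Daux (a :: (c :: t' ++ d)) = (if c < a then 1 else 0) + Daux (c :: t' ++ d)
          from rfl,
        ih, show Daux (a :: c :: t') = (if c < a then 1 else 0) + Daux (c :: t') from rfl,
        List.getLast?_cons_cons]
      omega

private lemma D_replicate (m c : ℕ) : Daux (List.replicate m c) = 0 := by
  induction m with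
  | zero => rfl
  | succ m ih =>
    rw [List.replicate_succ]
    cases m with
    | zero => rfl
    | succ m' =>
      rw [show Daux (c :: List.replicate (m'+1) c)
          = (if c < c then 1 else 0) + Daux (List.replicate (m'+1) c) from rfl]
      simp [ih]

private lemma D_map_succ (l : List ℕ) : Daux (l.map (·+1)) = Daux l := by
  induction l with
  | nil => rfl
  | cons a l ih =>
    cases l with
    | nil => rfl
    | cons b l' =>
      show (if b+1 < a+1 then 1 else 0) + Daux ((b::l').map (·+1))
        = (if b < a then 1 else 0) + Daux (b::l')
      rw [ih]
      by_cases h : b < a <;> simp [h]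

private lemma descents_map_succ (l : List ℕ) : descents (l.map (·+1)) = descents l := by
  rw [descents_eq_D, descents_eq_D, D_map_succ]

/-! ### `baseList` facts -/

private lemma baseList_succ (m n : ℕ) :
    baseList m (n + 1) = List.replicate m 1 ++ (baseList m n).map (·+1) := by
  unfold baseList
  rw [List.range_succ_eq_map, List.flatMap_cons, List.map_flatMap]
  congr 1
  rw [List.flatMap_map]
  congr 1
  funext i
  simp [List.map_replicate]

private lemma mem_baseList {m n x : ℕ} (h : x ∈ baseList m n) : 1 ≤ x ∧ x ≤ n := by
  unfold baseList at h
  rw [List.mem_flatMap] at h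
  obtain ⟨i, hi, hx⟩ := h
  rw [List.mem_replicate] at hx
  rw [List.mem_range] at hi
  omega

private lemma length_baseList (m n : ℕ) : (baseList m n).length = m * n := by
  induction n with
  | zero => rfl
  | succ n ih =>
    rw [baseList_succ, List.length_append, List.length_replicate, List.length_map, ih]
    ring

private lemma count_one_baseList (m n : ℕ) : (baseList m (n+1)).count 1 = m := by
  rw [baseList_succ, List.count_append]
  have h1 : (List.replicate m (1:ℕ)).count 1 = m := by simp
  have h2 : ((baseList m n).map (·+1)).count 1 = 0 := by
    rw [List.count_eq_zero]
    intro h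
    rw [List.mem_map] at h
    obtain ⟨x, hxm, hx⟩ := h
    have := (mem_baseList hxm).1
    omega
  rw [h1, h2]
  omega

private lemma mem_map_baseList {m n x : ℕ} (h : x ∈ (baseList m n).map (·+1)) : 2 ≤ x := by
  rw [List.mem_map] at h
  obtain ⟨y, hy, rfl⟩ := h
  have := (mem_baseList hy).1
  omega

/-! ### getD helpers -/

private lemma getD_replicate' {m i c : ℕ} (h : i < m) : (List.replicate m c).getD i 0 = c := by
  rw [List.getD_eq_getElem _ _ (by simpa using h)]; simp

private lemma getD_mem' {l : List ℕ} {i : ℕ} (h : i < l.length) : l.getD i 0 ∈ l := by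
  rw [List.getD_eq_getElem _ _ h]; exact List.getElem_mem h

private lemma getD_map_succ' {l : List ℕ} {i : ℕ} (h : i < l.length) :
    (l.map (·+1)).getD i 0 = l.getD i 0 + 1 := by
  rw [List.getD_eq_getElem _ _ (by simpa using h), List.getD_eq_getElem _ _ h]
  simp

private lemma getD_block₁ (t d : List ℕ) (m : ℕ) {i : ℕ} (h : i < t.length) :
    (t ++ (List.replicate m 1 ++ d)).getD i 0 = t.getD i 0 :=
  List.getD_append _ _ _ _ h

private lemma getD_block₂ (t d : List ℕ) (m : ℕ) {i : ℕ} (h1 : t.length ≤ i)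
    (h2 : i < t.length + m) :
    (t ++ (List.replicate m 1 ++ d)).getD i 0 = 1 := by
  rw [List.getD_append_right _ _ _ _ h1, List.getD_append _ _ _ _ (by simp; omega),
    getD_replicate' (by omega)]

private lemma getD_block₃ (t d : List ℕ) (m : ℕ) {i : ℕ} (h : t.length + m ≤ i) :
    (t ++ (List.replicate m 1 ++ d)).getD i 0 = d.getD (i - t.length - m) 0 := by
  rw [List.getD_append_right _ _ _ _ (by omega), List.getD_append_right _ _ _ _ (by simp; omega)]
  congr 1
  simp

private lemma getD_td₁ (t d : List ℕ) {i : ℕ} (h : i < t.length) :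
    (t ++ d).getD i 0 = t.getD i 0 :=
  List.getD_append _ _ _ _ h

private lemma getD_td₂ (t d : List ℕ) {i : ℕ} (h : t.length ≤ i) :
    (t ++ d).getD i 0 = d.getD (i - t.length) 0 :=
  List.getD_append_right _ _ _ _ h

/-! ### Stirling transfer lemmas -/

private lemma stir_ins (t d : List ℕ) (m : ℕ) (ht : ∀ x ∈ t, 2 ≤ x) (hd : ∀ x ∈ d, 2 ≤ x)
    (hs : IsStirlingPerm (t ++ d)) :
    IsStirlingPerm (t ++ (List.replicate m 1 ++ d)) := by
  intro u v w huv hvw hw heq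
  set T := t.length with hT
  set Dl := d.length with hD
  have hlen : (t ++ (List.replicate m 1 ++ d)).length = T + (m + Dl) := by simp [hT, hD]
  rw [hlen] at hw
  have val₁ : ∀ i, i < T → 2 ≤ (t ++ (List.replicate m 1 ++ d)).getD i 0 := fun i hi => by
    rw [getD_block₁ _ _ _ hi]; exact ht _ (getD_mem' hi)
  have val₃ : ∀ i, T + m ≤ i → i < T + m + Dl → 2 ≤ (t ++ (List.replicate m 1 ++ d)).getD i 0 :=
    fun i h1 h2 => by
      rw [getD_block₃ _ _ _ h1]; exact hd _ (getD_mem' (by omega))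
  by_cases hv : T ≤ v ∧ v < T + m
  · rw [getD_block₂ _ _ _ hv.1 hv.2]
    by_cases hu : u < T
    · exact le_trans (by norm_num) (val₁ u hu)
    · rcases Nat.lt_or_ge u (T + m) with hu2 | hu2
      · rw [getD_block₂ _ _ _ (by omega) hu2]
      · omega
  · push_neg at hv
    by_cases hu : T ≤ u ∧ u < T + m
    · have hvge : T + m ≤ v := by omega
      have hwge : T + m ≤ w := by omega
      rw [getD_block₂ _ _ _ hu.1 hu.2] at heq ⊢
      have := val₃ w hwge (by omega)
      omega
    · by_cases hw2 : T ≤ w ∧ w < T + m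
      · have hu' : u < T := by omega
        have hv' : v < T := by omega
        rw [getD_block₂ _ _ _ hw2.1 hw2.2] at heq
        have := val₁ u hu'
        omega
      · have hu' : u < T ∨ T + m ≤ u := by omega
        have hw' : w < T ∨ T + m ≤ w := by omega
        have hv' : v < T ∨ T + m ≤ v := by omega
        set ψ : ℕ → ℕ := fun i => if i < T then i else i - m with hψ
        have hval : ∀ i, i < T ∨ (T + m ≤ i ∧ i < T + m + Dl) →
            (t ++ (List.replicate m 1 ++ d)).getD i 0 = (t ++ d).getD (ψ i) 0 := by
          intro i hi
          rcases hi with hi | ⟨hi1, hi2⟩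
          · rw [getD_block₁ _ _ _ hi, hψ]; simp only [if_pos hi]
            rw [getD_td₁ _ _ hi]
          · rw [getD_block₃ _ _ _ hi1, hψ]
            simp only [if_neg (by omega : ¬ i < T)]
            rw [getD_td₂ _ _ (by omega : t.length ≤ i - m)]
            congr 1
            omega
        rw [hval u (by omega), hval v (by omega)]
        rw [hval u (by omega), hval w (by omega)] at heq
        refine hs (ψ u) (ψ v) (ψ w) ?_ ?_ ?_ heq
        · rw [hψ]; simp only; split <;> split <;> omega
        · rw [hψ]; simp only; split <;> split <;> omega
        · rw [hψ]; simp only [List.length_append]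
          split <;> omega

private lemma stir_rem (t d : List ℕ) (m : ℕ)
    (hs : IsStirlingPerm (t ++ (List.replicate m 1 ++ d))) :
    IsStirlingPerm (t ++ d) := by
  intro u v w huv hvw hw heq
  set T := t.length with hT
  rw [List.length_append] at hw
  set φ : ℕ → ℕ := fun i => if i < T then i else i + m with hφ
  have hval : ∀ i, i < T + d.length →
      (t ++ d).getD i 0 = (t ++ (List.replicate m 1 ++ d)).getD (φ i) 0 := by
    intro i hi
    rw [hφ]
    by_cases h : i < T
    · simp only [if_pos h]
      rw [getD_td₁ _ _ h, getD_block₁ _ _ _ h]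
    · simp only [if_neg h]
      rw [getD_td₂ _ _ (by omega), getD_block₃ _ _ _ (by omega)]
      congr 1
      omega
  rw [hval u (by omega), hval v (by omega)]
  rw [hval u (by omega), hval w (by omega)] at heq
  refine hs (φ u) (φ v) (φ w) ?_ ?_ ?_ heq
  · rw [hφ]; simp only; split <;> split <;> omega
  · rw [hφ]; simp only; split <;> split <;> omega
  · rw [hφ]; simp only [List.length_append, List.length_replicate]
    split <;> omega

private lemma stir_map {l : List ℕ} : IsStirlingPerm (l.map (·+1)) ↔ IsStirlingPerm l := by
  constructor
  · intro hs u v w huv hvw hw heq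
    have h := hs u v w huv hvw (by simpa using hw)
      (by rw [getD_map_succ' (by omega), getD_map_succ' hw, heq])
    rw [getD_map_succ' (by omega), getD_map_succ' (by omega)] at h
    omega
  · intro hs u v w huv hvw hw heq
    rw [List.length_map] at hw
    rw [getD_map_succ' (by omega), getD_map_succ' hw] at heq
    rw [getD_map_succ' (by omega), getD_map_succ' (by omega)]
    have := hs u v w huv hvw hw (by omega)
    omega

/-! ### Block decomposition -/

private lemma block_decomp (l : List ℕ) (m : ℕ) (hm : 1 ≤ m) (hs : IsStirlingPerm l)
    (hpos : ∀ x ∈ l, 1 ≤ x) (hcount : l.count 1 = m) :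
    ∃ t d : List ℕ, l = t ++ (List.replicate m 1 ++ d) ∧ (∀ x ∈ t, 2 ≤ x) ∧ (∀ x ∈ d, 2 ≤ x) := by
  classical
  set t := l.takeWhile (· ≠ 1) with ht
  set rest := l.dropWhile (· ≠ 1) with hrest
  have hl : l = t ++ rest := List.takeWhile_append_dropWhile.symm
  have ht1 : ∀ x ∈ t, x ≠ 1 := fun x hx => by simpa using List.mem_takeWhile_imp hx
  have htpos : ∀ x ∈ t, 2 ≤ x := fun x hx => by
    have h1 := hpos x (by rw [hl]; exact List.mem_append_left _ hx)
    have h2 := ht1 x hx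
    omega
  have h1mem : 1 ∈ l := List.count_pos_iff.mp (by omega)
  have hrest_ne : rest ≠ [] := by
    intro h
    rw [h, List.append_nil] at hl
    exact ht1 1 (hl ▸ h1mem) rfl
  obtain ⟨a, r, hr⟩ := List.exists_cons_of_ne_nil hrest_ne
  have ha : a = 1 := by
    have H := List.head?_dropWhile_not (fun x => decide (x ≠ 1)) l
    rw [← hrest, hr] at H
    simpa using H
  rw [ha] at hr
  set t1 := rest.takeWhile (· == 1) with ht1def
  set d := rest.dropWhile (· == 1) with hd
  have hrest_eq : rest = t1 ++ d := List.takeWhile_append_dropWhile.symm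
  have ht1rep : t1 = List.replicate t1.length 1 := by
    apply List.eq_replicate_of_mem
    intro x hx
    simpa using List.mem_takeWhile_imp hx
  have ht1len : 1 ≤ t1.length := by
    rw [ht1def, hr]
    simp [List.takeWhile_cons]
  have hld : l = t ++ (List.replicate t1.length 1 ++ d) := by
    rw [hl, hrest_eq, ← ht1rep]
  have hdpos : ∀ x ∈ d, 1 ≤ x := fun x hx => hpos x (by
    rw [hld]
    exact List.mem_append_right _ (List.mem_append_right _ hx))
  have hd1 : (1 : ℕ) ∉ d := by
    intro h1d
    cases hdne : d with
    | nil => rw [hdne] at h1d; simp at h1d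
    | cons b d2 =>
      have hbne : b ≠ 1 := by
        have H := List.head?_dropWhile_not (fun x => x == 1) rest
        rw [← hd, hdne] at H
        simpa using H
      have hbpos : 2 ≤ b := by
        have := hdpos b (by rw [hdne]; simp)
        omega
      obtain ⟨i, hi, hival⟩ := List.mem_iff_getElem.mp h1d
      have hgd : d.getD i 0 = 1 := by rw [List.getD_eq_getElem _ _ hi, hival]
      have hine : i ≠ 0 := by
        intro h0
        rw [h0, hdne] at hgd
        simp [List.getD] at hgd
        exact hbne hgd
      have hlen : l.length = t.length + (t1.length + d.length) := by
        rw [hld]; simp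
      have key := hs t.length (t.length + t1.length) (t.length + t1.length + i)
        (by omega) (by omega) (by rw [hlen]; omega)
      rw [hld] at key
      rw [getD_block₂ t d t1.length (le_refl _) (by omega),
        getD_block₃ t d t1.length (by omega),
        getD_block₃ t d t1.length (by omega)] at key
      have e1 : t.length + t1.length + i - t.length - t1.length = i := by omega
      have e2 : t.length + t1.length - t.length - t1.length = 0 := by omega
      rw [e1, e2, hgd] at key
      have := key rfl
      have hd0 : d.getD 0 0 = b := by rw [hdne]; rfl
      rw [hd0] at this
      omega
  have hdge : ∀ x ∈ d, 2 ≤ x := fun x hx => by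
    have h1 := hdpos x hx
    have h2 : x ≠ 1 := fun h => hd1 (h ▸ hx)
    omega
  have hcnt : t1.length = m := by
    have hsum : l.count 1 = t.count 1 + ((List.replicate t1.length 1).count 1 + d.count 1) := by
      rw [hld]; simp [List.count_append]
    have hct : t.count 1 = 0 := List.count_eq_zero.mpr (fun h => ht1 1 h rfl)
    have hcd : d.count 1 = 0 := List.count_eq_zero.mpr hd1
    have hcr : (List.replicate t1.length 1).count 1 = t1.length := by simp
    omega
  exact ⟨t, d, by rw [← hcnt]; exact hld, htpos, hdge⟩

/-! ### Insertion -/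

private def insb (l' : List ℕ) (j m : ℕ) : List ℕ :=
  l'.take j ++ (List.replicate m 1 ++ l'.drop j)

private lemma D_ins (l' : List ℕ) (m j : ℕ) (hm : 1 ≤ m) (hj : j ≤ l'.length)
    (hpos : ∀ x ∈ l', 2 ≤ x) :
    Daux (insb l' j m) + (if 1 ≤ j ∧ j < l'.length ∧ l'.getD j 0 < l'.getD (j-1) 0 then 1 else 0)
      = Daux l' + (if 1 ≤ j then 1 else 0) := by
  have hrephd : (List.replicate m 1 ++ l'.drop j).head? = some 1 := by
    cases m with
    | zero => omega
    | succ m' => rfl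
  have hrepgl : (List.replicate m (1:ℕ)).getLast? = some 1 := by
    cases m with
    | zero => omega
    | succ m' => simp [List.getLast?_replicate]
  have e1 : Daux (insb l' j m) = Daux (l'.take j) + Daux (List.replicate m 1 ++ l'.drop j)
      + (match (l'.take j).getLast?, (List.replicate m 1 ++ l'.drop j).head? with
        | some a, some b => if b < a then 1 else 0 | _, _ => 0) := D_append _ _
  have e2 : Daux (List.replicate m 1 ++ l'.drop j)
      = Daux (List.replicate m 1) + Daux (l'.drop j)
      + (match (List.replicate m (1:ℕ)).getLast?, (l'.drop j).head? with
        | some a, some b => if b < a then 1 else 0 | _, _ => 0) := D_append _ _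
  have e3 : Daux l' = Daux (l'.take j) + Daux (l'.drop j)
      + (match (l'.take j).getLast?, (l'.drop j).head? with
        | some a, some b => if b < a then 1 else 0 | _, _ => 0) := by
    conv_lhs => rw [← List.take_append_drop j l']
    exact D_append _ _
  rw [hrephd] at e1
  rw [hrepgl] at e2
  rw [D_replicate] at e2
  rcases Nat.eq_zero_or_pos j with h0 | h0
  · subst h0
    have hgl : (l'.take 0).getLast? = none := by simp
    rw [hgl] at e1 e3
    dsimp only at e1 e3
    rcases Nat.lt_or_ge 0 l'.length with h1 | h1
    · have hhd : (l'.drop 0).head? = some (l'.getD 0 0) := by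
        rw [List.head?_drop, List.getD_eq_getElem _ _ h1, List.getElem?_eq_getElem h1]
      rw [hhd] at e2
      dsimp only at e2
      have hnlt : ¬ l'.getD 0 0 < 1 := by have := hpos _ (getD_mem' h1); omega
      rw [if_neg hnlt] at e2
      rw [if_neg (by omega : ¬ (1 ≤ 0 ∧ 0 < l'.length ∧ l'.getD 0 0 < l'.getD (0-1) 0)),
        if_neg (by omega : ¬ 1 ≤ 0)]
      omega
    · have hhd : (l'.drop 0).head? = none := by
        rw [List.head?_drop, List.getElem?_eq_none h1]
      rw [hhd] at e2
      dsimp only at e2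
      rw [if_neg (by omega : ¬ (1 ≤ 0 ∧ 0 < l'.length ∧ l'.getD 0 0 < l'.getD (0-1) 0)),
        if_neg (by omega : ¬ 1 ≤ 0)]
      omega
  · have hgl : (l'.take j).getLast? = some (l'.getD (j-1) 0) := by
      rw [List.getLast?_eq_getElem?, List.length_take]
      have hlt : min j l'.length - 1 < j := by omega
      rw [List.getElem?_take, if_pos hlt, List.getD_eq_getElem _ _ (by omega),
        List.getElem?_eq_getElem (by omega)]
      congr 2
      omega
    rw [hgl] at e1 e3
    dsimp only at e1
    have hone : (1 : ℕ) < l'.getD (j-1) 0 := by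
      have := hpos _ (getD_mem' (show j - 1 < l'.length by omega))
      omega
    rw [if_pos hone] at e1
    rw [if_pos (show 1 ≤ j by omega)]
    rcases Nat.lt_or_ge j l'.length with h1 | h1
    · have hhd : (l'.drop j).head? = some (l'.getD j 0) := by
        rw [List.head?_drop, List.getD_eq_getElem _ _ h1, List.getElem?_eq_getElem h1]
      rw [hhd] at e2 e3
      dsimp only at e2 e3
      have hnlt : ¬ l'.getD j 0 < 1 := by have := hpos _ (getD_mem' h1); omega
      rw [if_neg hnlt] at e2
      by_cases hdesc : l'.getD j 0 < l'.getD (j-1) 0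
      · rw [if_pos hdesc] at e3
        rw [if_pos ⟨by omega, h1, hdesc⟩]
        omega
      · rw [if_neg hdesc] at e3
        rw [if_neg (by tauto)]
        omega
    · have hhd : (l'.drop j).head? = none := by
        rw [List.head?_drop, List.getElem?_eq_none h1]
      rw [hhd] at e2 e3
      dsimp only at e2 e3
      rw [if_neg (by omega : ¬ (1 ≤ j ∧ j < l'.length ∧ l'.getD j 0 < l'.getD (j-1) 0))]
      omega

private lemma descents_card (l : List ℕ) :
    descents l = ((Finset.range (l.length - 1)).filter
      (fun i => l.getD (i + 1) 0 < l.getD i 0)).card := by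
  simp [descents, Finset.range, Finset.filter, Multiset.range]

private lemma descents_le (l : List ℕ) : descents l ≤ l.length - 1 := by
  rw [descents_card]
  exact le_trans (Finset.card_filter_le _ _) (by simp)

private lemma card_gapset (l' : List ℕ) (m κ : ℕ) (hm : 1 ≤ m) (hpos : ∀ x ∈ l', 2 ≤ x) :
    ((Finset.range (l'.length + 1)).filter (fun j => descents (insb l' j m) = κ)).card
    = (if descents l' = κ then κ + 1 else 0)
      + (if descents l' + 1 = κ then l'.length - descents l' else 0) := by
  classical
  set L := l'.length with hL
  have hP0 : descents (insb l' 0 m) = descents l' := by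
    have h := D_ins l' m 0 hm (by omega) hpos
    rw [descents_eq_D, descents_eq_D]
    rw [if_neg (by omega : ¬ (1 ≤ 0 ∧ 0 < l'.length ∧ l'.getD 0 0 < l'.getD (0-1) 0)),
      if_neg (by omega : ¬ 1 ≤ 0)] at h
    omega
  have hshift : ∀ j ∈ Finset.range L, (if descents (insb l' (j+1) m) = κ then (1:ℕ) else 0)
      = (if (j+1 < L ∧ l'.getD (j+1) 0 < l'.getD j 0)
          then (if descents l' = κ then 1 else 0)
          else (if descents l' + 1 = κ then 1 else 0)) := by
    intro j hj
    rw [Finset.mem_range] at hj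
    have h := D_ins l' m (j+1) hm (by omega) hpos
    simp only [Nat.add_sub_cancel] at h
    rw [if_pos (by omega : 1 ≤ j + 1)] at h
    rw [descents_eq_D l', descents_eq_D (insb l' (j+1) m)]
    by_cases hc : j + 1 < L ∧ l'.getD (j+1) 0 < l'.getD j 0
    · rw [if_pos hc]
      rw [if_pos (show 1 ≤ j + 1 ∧ j + 1 < l'.length ∧ l'.getD (j+1) 0 < l'.getD j 0 from
        ⟨by omega, hc.1, hc.2⟩)] at h
      split_ifs <;> omega
    · rw [if_neg hc]
      rw [if_neg (show ¬ (1 ≤ j + 1 ∧ j + 1 < l'.length ∧ l'.getD (j+1) 0 < l'.getD j 0) by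
        rw [hL] at hc; tauto)] at h
      split_ifs <;> omega
  have hfs : (Finset.range L).filter (fun j => j+1 < L ∧ l'.getD (j+1) 0 < l'.getD j 0)
      = (Finset.range (L - 1)).filter (fun j => l'.getD (j+1) 0 < l'.getD j 0) := by
    ext j
    simp only [Finset.mem_filter, Finset.mem_range]
    constructor
    · rintro ⟨h1, h2, h3⟩; exact ⟨by omega, h3⟩
    · rintro ⟨h1, h2⟩; exact ⟨by omega, by omega, h2⟩
  have hcardcond : ((Finset.range L).filter
      (fun j => j+1 < L ∧ l'.getD (j+1) 0 < l'.getD j 0)).card = descents l' := by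
    rw [hfs, descents_card]
  rw [Finset.card_filter, Finset.sum_range_succ', hP0, Finset.sum_congr rfl hshift]
  by_cases hA : descents l' = κ
  · have hB : ¬ (descents l' + 1 = κ) := by omega
    have hcg : ∀ j ∈ Finset.range L, (if (j+1 < L ∧ l'.getD (j+1) 0 < l'.getD j 0)
        then (if descents l' = κ then (1:ℕ) else 0) else (if descents l' + 1 = κ then 1 else 0))
        = if (j+1 < L ∧ l'.getD (j+1) 0 < l'.getD j 0) then 1 else 0 := by
      intro j _
      by_cases hc : j+1 < L ∧ l'.getD (j+1) 0 < l'.getD j 0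
      · rw [if_pos hc, if_pos hA, if_pos hc]
      · rw [if_neg hc, if_neg hB, if_neg hc]
    rw [Finset.sum_congr rfl hcg, ← Finset.card_filter, hcardcond, hA,
      if_pos rfl, if_pos rfl]
    simp
  · by_cases hB : descents l' + 1 = κ
    · have hsc : ∀ j ∈ Finset.range L, (if (j+1 < L ∧ l'.getD (j+1) 0 < l'.getD j 0)
          then (if descents l' = κ then (1:ℕ) else 0) else (if descents l' + 1 = κ then 1 else 0))
          = if ¬ (j+1 < L ∧ l'.getD (j+1) 0 < l'.getD j 0) then 1 else 0 := by
        intro j _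
        by_cases hc : j+1 < L ∧ l'.getD (j+1) 0 < l'.getD j 0
        · rw [if_pos hc, if_neg hA, if_neg (not_not_intro hc)]
        · rw [if_neg hc, if_pos hB, if_pos hc]
      rw [Finset.sum_congr rfl hsc, ← Finset.card_filter, Finset.filter_not,
        Finset.card_sdiff_of_subset (Finset.filter_subset _ _), hcardcond, Finset.card_range,
        if_neg hA, if_neg hA, if_pos hB]
      have hdle : descents l' ≤ L - 1 := by rw [hL]; exact descents_le l'
      omega
    · have hsc : ∀ j ∈ Finset.range L, (if (j+1 < L ∧ l'.getD (j+1) 0 < l'.getD j 0)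
          then (if descents l' = κ then (1:ℕ) else 0) else (if descents l' + 1 = κ then 1 else 0))
          = 0 := by
        intro j _
        by_cases hc : j+1 < L ∧ l'.getD (j+1) 0 < l'.getD j 0
        · rw [if_pos hc, if_neg hA]
        · rw [if_neg hc, if_neg hB]
      rw [Finset.sum_congr rfl hsc, if_neg hA, if_neg hA, if_neg hB]
      simp

end EulerianAux


section EulerianMain

private noncomputable def SPF (b : List ℕ) (κ : ℕ) : Finset (List ℕ) := by
  classical
  exact (b.permutations.toFinset).filter (fun l => IsStirlingPerm l ∧ descents l = κ)

private lemma mem_SPF {b : List ℕ} {κ : ℕ} {l : List ℕ} :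
    l ∈ SPF b κ ↔ l.Perm b ∧ IsStirlingPerm l ∧ descents l = κ := by
  classical
  simp only [SPF, Finset.mem_filter, List.mem_toFinset, List.mem_permutations]

private lemma eulerianT_eq_card (m n κ : ℕ) :
    eulerianT m n (κ : ℤ) = (SPF (baseList m n) κ).card := by
  rw [eulerianT, ← Nat.card_eq_finsetCard]
  apply Nat.card_congr
  apply Equiv.subtypeEquivRight
  intro l
  rw [mem_SPF]
  constructor
  · rintro ⟨h1, h2, h3⟩; exact ⟨h1, h2, by exact_mod_cast h3⟩
  · rintro ⟨h1, h2, h3⟩; exact ⟨h1, h2, by exact_mod_cast h3⟩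

private lemma eulerianT_neg (m n : ℕ) : eulerianT m n (-1) = 0 := by
  have : IsEmpty {l : List ℕ // l.Perm (baseList m n) ∧ IsStirlingPerm l
      ∧ (descents l : ℤ) = -1} := by
    constructor
    rintro ⟨l, -, -, h⟩
    omega
  exact Nat.card_of_isEmpty

private lemma card_SPF_map (b : List ℕ) (κ : ℕ) :
    (SPF (b.map (·+1)) κ).card = (SPF b κ).card := by
  classical
  symm
  apply Finset.card_bij (fun l _ => l.map (·+1))
  · intro l hl
    rw [mem_SPF] at hl ⊢
    exact ⟨hl.1.map _, stir_map.mpr hl.2.1, by rw [descents_map_succ]; exact hl.2.2⟩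
  · intro a ha b hb h
    exact List.map_injective_iff.mpr (fun x y hxy => by omega) h
  · intro l hl
    rw [mem_SPF] at hl
    have hpos : ∀ x ∈ l, 1 ≤ x := by
      intro x hx
      have hx2 := hl.1.subset hx
      rw [List.mem_map] at hx2
      obtain ⟨y, -, rfl⟩ := hx2
      omega
    have hback : (l.map (· - 1)).map (·+1) = l := by
      rw [List.map_map]
      have : ∀ a ∈ l, ((fun x => x + 1) ∘ fun x => x - 1) a = id a := by
        intro a ha
        have := hpos a ha
        simp only [Function.comp_apply, id_eq]
        omega
      rw [List.map_congr_left this, List.map_id]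
    refine ⟨l.map (· - 1), ?_, hback⟩
    rw [mem_SPF]
    refine ⟨?_, ?_, ?_⟩
    · have hp := hl.1.map (· - 1)
      have : (b.map (·+1)).map (· - 1) = b := by
        rw [List.map_map]
        have : ((fun x => x - 1) ∘ fun x => x + 1) = id := by
          funext x; simp
        rw [this, List.map_id]
      rwa [this] at hp
    · exact stir_map.mp (by rw [hback]; exact hl.2.1)
    · have := descents_map_succ (l.map (· - 1))
      rw [hback] at this
      rw [← this]
      exact hl.2.2

private lemma filter_block (t d : List ℕ) (m : ℕ) (ht : ∀ x ∈ t, 2 ≤ x) (hd : ∀ x ∈ d, 2 ≤ x) :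
    (t ++ (List.replicate m 1 ++ d)).filter (· ≠ 1) = t ++ d := by
  rw [List.filter_append, List.filter_append]
  have h1 : t.filter (· ≠ 1) = t :=
    List.filter_eq_self.mpr (fun a ha => by have := ht a ha; simp; omega)
  have h2 : d.filter (· ≠ 1) = d :=
    List.filter_eq_self.mpr (fun a ha => by have := hd a ha; simp; omega)
  have h3 : (List.replicate m (1:ℕ)).filter (· ≠ 1) = [] := by simp
  rw [h1, h2, h3, List.nil_append]

private lemma tw_block (t d : List ℕ) (m : ℕ) (hm : 1 ≤ m) (ht : ∀ x ∈ t, 2 ≤ x) :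
    (t ++ (List.replicate m 1 ++ d)).takeWhile (· ≠ 1) = t := by
  rw [List.takeWhile_append_of_pos (fun a ha => by have := ht a ha; simp; omega)]
  cases m with
  | zero => omega
  | succ m' =>
    rw [List.replicate_succ, List.cons_append, List.takeWhile_cons_of_neg (by simp),
      List.append_nil]

private lemma perm_insb (l' : List ℕ) (g m : ℕ) :
    (insb l' g m).Perm (List.replicate m 1 ++ l') := by
  show (l'.take g ++ (List.replicate m 1 ++ l'.drop g)).Perm _
  rw [← List.append_assoc]
  refine ((List.perm_append_comm).append_right (l'.drop g)).trans ?_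
  rw [List.append_assoc, List.take_append_drop]

private lemma fiber_card (m n' κ : ℕ) (hm : 1 ≤ m) {l' : List ℕ}
    (hl'perm : l'.Perm ((baseList m n').map (·+1))) (hl'st : IsStirlingPerm l') :
    ((SPF (baseList m (n'+1)) κ).filter (fun l => l.filter (· ≠ 1) = l')).card
      = ((Finset.range (l'.length + 1)).filter (fun j => descents (insb l' j m) = κ)).card := by
  classical
  have hl'pos : ∀ x ∈ l', 2 ≤ x := fun x hx => mem_map_baseList (hl'perm.subset hx)
  have hbase : baseList m (n'+1) = List.replicate m 1 ++ (baseList m n').map (·+1) :=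
    baseList_succ m n'
  have hfact : ∀ l, l ∈ (SPF (baseList m (n'+1)) κ).filter (fun l => l.filter (· ≠ 1) = l') →
      (l.takeWhile (· ≠ 1)).length ≤ l'.length
        ∧ insb l' (l.takeWhile (· ≠ 1)).length m = l ∧ descents l = κ := by
    intro l hl
    rw [Finset.mem_filter] at hl
    obtain ⟨hspf, hfil⟩ := hl
    rw [mem_SPF] at hspf
    obtain ⟨t, d, hltd, ht, hd⟩ := block_decomp l m hm hspf.2.1
      (fun x hx => (mem_baseList (hspf.1.subset hx)).1)
      (by rw [hspf.1.count_eq 1, count_one_baseList])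
    have htw : l.takeWhile (· ≠ 1) = t := by rw [hltd]; exact tw_block t d m hm ht
    have hfil' : t ++ d = l' := by rw [← hfil, hltd, filter_block t d m ht hd]
    have hins : insb l' t.length m = l := by
      rw [← hfil']
      show (t ++ d).take t.length ++ (List.replicate m 1 ++ (t ++ d).drop t.length) = l
      rw [List.take_left, List.drop_left, ← hltd]
    refine ⟨?_, ?_, hspf.2.2⟩
    · rw [htw, ← hfil', List.length_append]; omega
    · rw [htw, hins]
  apply Finset.card_bij' (i := fun l _ => (l.takeWhile (· ≠ 1)).length)
    (j := fun g _ => insb l' g m)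
  · intro l hl
    obtain ⟨h1, h2, h3⟩ := hfact l hl
    rw [Finset.mem_filter, Finset.mem_range]
    exact ⟨by omega, by rw [h2]; exact h3⟩
  · intro g hg
    rw [Finset.mem_filter, Finset.mem_range] at hg
    obtain ⟨hg1, hg2⟩ := hg
    have hgle : g ≤ l'.length := by omega
    rw [Finset.mem_filter]
    constructor
    · rw [mem_SPF]
      refine ⟨?_, ?_, hg2⟩
      · exact (perm_insb l' g m).trans (by rw [hbase]; exact hl'perm.append_left _)
      · show IsStirlingPerm (l'.take g ++ (List.replicate m 1 ++ l'.drop g))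
        apply stir_ins
        · exact fun x hx => hl'pos x (List.mem_of_mem_take hx)
        · exact fun x hx => hl'pos x (List.mem_of_mem_drop hx)
        · rw [List.take_append_drop]; exact hl'st
    · show (l'.take g ++ (List.replicate m 1 ++ l'.drop g)).filter (· ≠ 1) = l'
      rw [filter_block _ _ m (fun x hx => hl'pos x (List.mem_of_mem_take hx))
        (fun x hx => hl'pos x (List.mem_of_mem_drop hx)), List.take_append_drop]
  · intro l hl
    exact (hfact l hl).2.1
  · intro g hg
    rw [Finset.mem_filter, Finset.mem_range] at hg
    have hgle : g ≤ l'.length := by omega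
    have htw : (insb l' g m).takeWhile (· ≠ 1) = l'.take g := by
      show (l'.take g ++ (List.replicate m 1 ++ l'.drop g)).takeWhile (· ≠ 1) = l'.take g
      exact tw_block _ _ m hm (fun x hx => hl'pos x (List.mem_of_mem_take hx))
    rw [htw, List.length_take]
    omega

private lemma main_count (m n' κ : ℕ) (hm : 1 ≤ m) :
    (SPF (baseList m (n'+1)) κ).card
      = (κ+1) * (SPF ((baseList m n').map (·+1)) κ).card
        + (if 1 ≤ κ then (m * n' + 1 - κ) * (SPF ((baseList m n').map (·+1)) (κ-1)).card
           else 0) := by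
  classical
  set b' := (baseList m n').map (·+1) with hb'
  set SP' := b'.permutations.toFinset.filter IsStirlingPerm with hSP'
  have hmemSP' : ∀ l', l' ∈ SP' ↔ (l'.Perm b' ∧ IsStirlingPerm l') := by
    intro l'
    rw [hSP', Finset.mem_filter, List.mem_toFinset, List.mem_permutations]
  have hbase : baseList m (n'+1) = List.replicate m 1 ++ b' := baseList_succ m n'
  have hb'len : b'.length = m * n' := by
    rw [hb', List.length_map, length_baseList]
  have hstep : ∀ l ∈ SPF (baseList m (n'+1)) κ, l.filter (· ≠ 1) ∈ SP' := by
    intro l hl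
    rw [mem_SPF] at hl
    obtain ⟨t, d, hltd, ht, hd⟩ := block_decomp l m hm hl.2.1
      (fun x hx => (mem_baseList (hl.1.subset hx)).1)
      (by rw [hl.1.count_eq 1, count_one_baseList])
    rw [hmemSP']
    constructor
    · have hfb : (baseList m (n'+1)).filter (· ≠ 1) = b' := by
        rw [hbase, List.filter_append]
        have h3 : (List.replicate m (1:ℕ)).filter (· ≠ 1) = [] := by simp
        have h4 : b'.filter (· ≠ 1) = b' :=
          List.filter_eq_self.mpr (fun a ha => by
            have := mem_map_baseList (hb' ▸ ha); simp; omega)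
        rw [h3, h4, List.nil_append]
      exact hfb ▸ (hl.1.filter (· ≠ 1))
    · rw [hltd, filter_block t d m ht hd]
      exact stir_rem t d m (hltd ▸ hl.2.1)
  rw [Finset.card_eq_sum_card_fiberwise hstep]
  have hsumeq : ∀ l' ∈ SP',
      ((SPF (baseList m (n'+1)) κ).filter (fun l => l.filter (· ≠ 1) = l')).card
      = (if descents l' = κ then κ + 1 else 0)
        + (if descents l' + 1 = κ then m * n' + 1 - κ else 0) := by
    intro l' hl'
    rw [hmemSP'] at hl'
    rw [fiber_card m n' κ hm hl'.1 hl'.2,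
      card_gapset l' m κ hm (fun x hx => mem_map_baseList (hl'.1.subset hx))]
    congr 1
    by_cases h : descents l' + 1 = κ
    · rw [if_pos h, if_pos h]
      have hlen : l'.length = m * n' := by rw [hl'.1.length_eq, hb'len]
      omega
    · rw [if_neg h, if_neg h]
  rw [Finset.sum_congr rfl hsumeq, Finset.sum_add_distrib]
  have hterm1 : (∑ l' ∈ SP', if descents l' = κ then κ + 1 else 0)
      = (κ + 1) * (SPF b' κ).card := by
    have hset : SP'.filter (fun l' => descents l' = κ) = SPF b' κ := by
      ext l
      rw [Finset.mem_filter, hmemSP' l, mem_SPF]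
      tauto
    rw [← Finset.sum_filter, hset, Finset.sum_const, smul_eq_mul, mul_comm]
  have hterm2 : (∑ l' ∈ SP', if descents l' + 1 = κ then m * n' + 1 - κ else 0)
      = if 1 ≤ κ then (m * n' + 1 - κ) * (SPF b' (κ-1)).card else 0 := by
    by_cases hκ : 1 ≤ κ
    · have hset : SP'.filter (fun l' => descents l' + 1 = κ) = SPF b' (κ-1) := by
        ext l
        rw [Finset.mem_filter, hmemSP' l, mem_SPF]
        constructor
        · rintro ⟨⟨h1, h2⟩, h3⟩; exact ⟨h1, h2, by omega⟩
        · rintro ⟨h1, h2, h3⟩; exact ⟨⟨h1, h2⟩, by omega⟩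
      rw [if_pos hκ, ← Finset.sum_filter, hset, Finset.sum_const, smul_eq_mul, mul_comm]
    · rw [if_neg hκ]
      apply Finset.sum_eq_zero
      intro l _
      rw [if_neg (by omega)]
  rw [hterm1, hterm2]

end EulerianMain

theorem eulerianT_recurrence (m n : ℕ) (k : ℤ) (hm : 1 ≤ m) (hn : 2 ≤ n)
    (hk0 : 0 ≤ k) (hk : k ≤ (n : ℤ) - 1) :
    (eulerianT m n k : ℤ) =
      (k + 1) * (eulerianT m (n - 1) k : ℤ) +
        ((m : ℤ) * (n : ℤ) - k - (m : ℤ) + 1) * (eulerianT m (n - 1) (k - 1) : ℤ) := by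
  classical
  set κ := k.toNat with hκ
  have hkκ : k = (κ : ℤ) := (Int.toNat_of_nonneg hk0).symm
  set n' := n - 1 with hn'
  have hn1 : n = n' + 1 := by omega
  have hn'1 : 1 ≤ n' := by omega
  have hκn : (κ : ℤ) ≤ (n' : ℤ) := by omega
  have hmain := main_count m n' κ hm
  have hE : eulerianT m n k = (SPF (baseList m (n'+1)) κ).card := by
    rw [hkκ, hn1, eulerianT_eq_card]
  have hE1 : (SPF ((baseList m n').map (·+1)) κ).card = eulerianT m (n-1) k := by
    rw [card_SPF_map, hkκ, hn', eulerianT_eq_card]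
  by_cases hκ0 : 1 ≤ κ
  · have hE2 : (SPF ((baseList m n').map (·+1)) (κ-1)).card = eulerianT m (n-1) (k-1) := by
      rw [card_SPF_map, hn']
      have : k - 1 = ((κ - 1 : ℕ) : ℤ) := by omega
      rw [this, eulerianT_eq_card]
    rw [if_pos hκ0] at hmain
    rw [hE, hmain, hE1, hE2]
    push_cast
    have hsub : ((m * n' + 1 - κ : ℕ) : ℤ) = (m : ℤ) * (n' : ℤ) + 1 - (κ : ℤ) := by
      have hle : (κ : ℤ) ≤ (m : ℤ) * (n' : ℤ) + 1 := by nlinarith [hκn]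
      have : κ ≤ m * n' + 1 := by exact_mod_cast hle
      push_cast [Nat.cast_sub this]
      ring
    rw [hsub]
    have hn'' : (n : ℤ) = (n' : ℤ) + 1 := by omega
    rw [hkκ, hn'']
    ring
  · have hκz : κ = 0 := by omega
    have hk0' : k = 0 := by omega
    have hE2 : eulerianT m (n-1) (k-1) = 0 := by
      rw [hk0']
      exact eulerianT_neg m (n-1)
    rw [if_neg hκ0] at hmain
    rw [hE, hmain, hE1, hE2]
    push_cast
    rw [hk0', hκz]
    push_cast
    ring
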